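/- The function z ↦ conj(w(z)) is complex differentiable at every point of ℂ ∖ (Σ ∪ {0}), where Σ := ⋃_{k=0}^{M−1} { e^{a(θ−θ_k)} e^{iθ} : θ ∈ ℝ } is the union of the M logarithmic spirals; that is, the conjugate velocity profile is holomorphic away from the spirals and the origin. -/

import Mathlib

/-- The complex constant `A := −2ai/(a+i)`. -/
noncomputable def Aconst (a : ℝ) : ℂ := -2 * (a : ℂ) * Complex.I / ((a : ℂ) + Complex.I)

/-- The self-similar velocity profile
`W(r,θ) := e^{iθ} Σ_{k} (2a g_k/(r(a−i))) · conj( exp((2a/(a+i)) ln r) · e^{A(θ_k−θ)} ·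
e^{2πJ(r,θ,k)A}/(1−e^{2πA}) )`, where `J` is the winding-number function. -/
noncomputable def Wprof (a : ℝ) (M : ℕ) (g θs : Fin M → ℝ)
    (J : ℝ → ℝ → Fin M → ℤ) (r θ : ℝ) : ℂ :=
  Complex.exp (Complex.I * (θ : ℂ)) * ∑ k : Fin M,
    (2 * (a : ℂ) * (g k : ℂ) / ((r : ℂ) * ((a : ℂ) - Complex.I))) *
      (starRingEnd ℂ)
        (Complex.exp ((2 * (a : ℂ) / ((a : ℂ) + Complex.I)) * (Real.log r : ℂ)) *
          Complex.exp (Aconst a * ((θs k : ℂ) - (θ : ℂ))) *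
          (Complex.exp (2 * (Real.pi : ℂ) * (J r θ k : ℂ) * Aconst a) /
            (1 - Complex.exp (2 * (Real.pi : ℂ) * Aconst a))))

open Complex


lemma aux_ne (a : ℝ) : (a : ℂ) + I ≠ 0 := by
  intro h
  have := congrArg Complex.im h
  simp at this

lemma one_sub_exp_ne (a : ℝ) (ha : 0 < a) :
    1 - Complex.exp (2 * (Real.pi : ℂ) * Aconst a) ≠ 0 := by
  intro h
  have h1 : Complex.exp (2 * (Real.pi : ℂ) * Aconst a) = 1 := (sub_eq_zero.mp h).symm
  rw [Complex.exp_eq_one_iff] at h1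
  obtain ⟨n, hn⟩ := h1
  have hpi : (2 * (Real.pi : ℂ)) ≠ 0 := by
    simp [Real.pi_ne_zero]
  have hA : Aconst a = (n : ℂ) * I := by
    have h2 : 2 * (Real.pi : ℂ) * Aconst a = 2 * (Real.pi : ℂ) * ((n : ℂ) * I) := by
      rw [hn]; ring
    exact mul_left_cancel₀ hpi h2
  rw [Aconst, div_eq_iff (aux_ne a)] at hA
  have hre := congrArg Complex.re hA
  have him := congrArg Complex.im hA
  simp [Complex.mul_re, Complex.mul_im] at hre him
  subst hre
  push_cast at him
  linarith

lemma J_mem_mono (a : ℝ) (ha : 0 < a) (b θ L : ℝ) {j j' : ℤ}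
    (hj : 0 < a * (2 * Real.pi * (j : ℝ) + b - θ) + L) (hle : j ≤ j') :
    0 < a * (2 * Real.pi * (j' : ℝ) + b - θ) + L := by
  have h2 : (j : ℝ) ≤ (j' : ℝ) := by exact_mod_cast hle
  have key : a * (2 * Real.pi * (j' : ℝ) + b - θ) + L =
      (a * (2 * Real.pi * (j : ℝ) + b - θ) + L) + a * (2 * Real.pi) * ((j' : ℝ) - (j : ℝ)) := by
    ring
  have hnn : 0 ≤ a * (2 * Real.pi) * ((j' : ℝ) - (j : ℝ)) :=
    mul_nonneg (mul_nonneg ha.le (by positivity)) (sub_nonneg.mpr h2)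
  linarith

lemma J_eq_of (a : ℝ) (ha : 0 < a) {M : ℕ} (θs : Fin M → ℝ) (J : ℝ → ℝ → Fin M → ℤ)
    (hJ : ∀ (r θ : ℝ) (k : Fin M), 0 < r →
      IsLeast {j : ℤ | 0 < a * (2 * Real.pi * (j : ℝ) + θs k - θ) + Real.log r} (J r θ k))
    (r θ : ℝ) (hr : 0 < r) (k : Fin M) (j : ℤ)
    (h1 : 0 < a * (2 * Real.pi * (j : ℝ) + θs k - θ) + Real.log r)
    (h2 : a * (2 * Real.pi * ((j : ℝ) - 1) + θs k - θ) + Real.log r ≤ 0) :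
    J r θ k = j := by
  have hL := hJ r θ k hr
  have hle : J r θ k ≤ j := hL.2 h1
  have hge : j ≤ J r θ k := by
    by_contra hlt
    push_neg at hlt
    have hm : J r θ k ≤ j - 1 := by omega
    have h3 := J_mem_mono a ha (θs k) θ (Real.log r) hL.1 hm
    push_cast at h3
    linarith
  omega

lemma J_shift (a : ℝ) (ha : 0 < a) {M : ℕ} (θs : Fin M → ℝ) (J : ℝ → ℝ → Fin M → ℤ)
    (hJ : ∀ (r θ : ℝ) (k : Fin M), 0 < r →
      IsLeast {j : ℤ | 0 < a * (2 * Real.pi * (j : ℝ) + θs k - θ) + Real.log r} (J r θ k))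
    (r θ : ℝ) (hr : 0 < r) (k : Fin M) (n : ℤ) :
    J r (θ + 2 * Real.pi * (n : ℝ)) k = J r θ k + n := by
  have h1 := hJ r θ k hr
  have h2 := hJ r (θ + 2 * Real.pi * (n : ℝ)) k hr
  refine h2.unique ⟨?_, ?_⟩
  · have hm := h1.1
    simp only [Set.mem_setOf_eq] at hm ⊢
    push_cast
    linarith
  · intro j hj
    simp only [Set.mem_setOf_eq] at hj
    have hm : (j - n) ∈ {j : ℤ | 0 < a * (2 * Real.pi * (j : ℝ) + θs k - θ) + Real.log r} := by
      simp only [Set.mem_setOf_eq]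
      push_cast at hj ⊢
      linarith
    have := h1.2 hm
    omega

lemma wconj_eq (a : ℝ) (M : ℕ) (g θs : Fin M → ℝ) (J : ℝ → ℝ → Fin M → ℤ)
    (h4 : 1 - Complex.exp (2 * (Real.pi : ℂ) * Aconst a) ≠ 0)
    (r θ : ℝ) (hr : 0 < r) :
    (starRingEnd ℂ) (Wprof a M g θs J r θ) =
      ∑ k : Fin M,
        (2 * (a : ℂ) * (g k : ℂ) * Complex.exp (Aconst a * (θs k : ℂ)) /
            (((a : ℂ) + I) * (1 - Complex.exp (2 * (Real.pi : ℂ) * Aconst a)))) *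
          Complex.exp ((((a : ℂ) - I) / ((a : ℂ) + I)) * ((Real.log r : ℂ) + I * (θ : ℂ))) *
          Complex.exp (2 * (Real.pi : ℂ) * (J r θ k : ℂ) * Aconst a) := by
  have hA := aux_ne a
  have hrc : (r : ℂ) = Complex.exp ((Real.log r : ℂ)) := by
    rw [← Complex.ofReal_exp, Real.exp_log hr]
  simp only [Wprof, map_mul, map_sum, map_div₀, map_sub, map_one, Complex.conj_conj,
    ← Complex.exp_conj, Complex.conj_ofReal, Complex.conj_I, map_ofNat]
  rw [Finset.mul_sum]
  refine Finset.sum_congr rfl fun k _ => ?_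
  rw [hrc]
  have hEx : Complex.exp (-(Complex.I * (θ:ℂ))) *
      Complex.exp (2 * (a:ℂ) * (Real.log r : ℂ) / ((a:ℂ) + I)) *
      Complex.exp (Aconst a * ((θs k:ℂ) - (θ:ℂ)))
      = Complex.exp (Aconst a * (θs k:ℂ)) *
        Complex.exp (((a:ℂ) - I) * ((Real.log r:ℂ) + I * (θ:ℂ)) / ((a:ℂ) + I)) *
        Complex.exp ((Real.log r : ℂ)) := by
    simp only [← Complex.exp_add]
    congr 1
    simp only [Aconst]
    field_simp
    ring
  field_simp [h4, Complex.exp_ne_zero]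
  have h4' : 1 - Complex.exp (2 * Aconst a * (Real.pi : ℂ)) ≠ 0 := by
    rw [mul_right_comm]; exact h4
  rw [sub_neg_eq_add, div_eq_div_iff (mul_ne_zero hA h4') h4']
  linear_combination ((a:ℂ) * (g k : ℂ) * ((a:ℂ)+I) *
    (1 - Complex.exp (2 * Aconst a * (Real.pi:ℂ)))) * hEx



/-- The function `z ↦ conj(w(z))`, where `w(z) := W(|z|, arg z)`, is complex
differentiable at every point of `ℂ ∖ (Σ ∪ {0})`, where
`Σ := ⋃_k { e^{a(θ−θ_k)} e^{iθ} : θ ∈ ℝ }` is the union of the `M` logarithmic spirals. -/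
theorem Wprof_conj_holomorphic_off_spirals (a : ℝ) (ha : 0 < a) (M : ℕ) (hM : 1 ≤ M)
    (g θs : Fin M → ℝ) (J : ℝ → ℝ → Fin M → ℤ)
    (hJ : ∀ (r θ : ℝ) (k : Fin M), 0 < r →
      IsLeast {j : ℤ | 0 < a * (2 * Real.pi * (j : ℝ) + θs k - θ) + Real.log r} (J r θ k)) :
    ∀ z : ℂ,
      z ∉ (⋃ k : Fin M,
          {z' : ℂ | ∃ θ : ℝ,
            z' = (Real.exp (a * (θ - θs k)) : ℂ) * Complex.exp (Complex.I * (θ : ℂ))}) ∪ {0} →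
      DifferentiableAt ℂ
        (fun z' : ℂ =>
          (starRingEnd ℂ) (Wprof a M g θs J (‖z'‖) (Complex.arg z'))) z := by
  intro z hz
  simp only [Set.mem_union, Set.mem_iUnion, Set.mem_setOf_eq, Set.mem_singleton_iff, not_or,
    not_exists] at hz
  obtain ⟨hspir, hz0⟩ := hz
  have hr0 : 0 < ‖z‖ := norm_pos_iff.mpr hz0
  have h4 := one_sub_exp_ne a ha
  set α : ℝ := Complex.arg z with hα
  -- the off-spiral numerical condition
  have hnum : ∀ (k : Fin M) (j : ℤ),
      a * (2 * Real.pi * (j : ℝ) + θs k - α) + Real.log (‖z‖) ≠ 0 := by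
    intro k j h
    refine hspir k (α - 2 * Real.pi * (j : ℝ)) ?_
    have hlog : Real.log (‖z‖) = a * ((α - 2 * Real.pi * (j : ℝ)) - θs k) := by
      linarith
    have hzva : (Real.exp (a * ((α - 2 * Real.pi * (j : ℝ)) - θs k)) : ℝ) = ‖z‖ := by
      rw [← hlog, Real.exp_log hr0]
    rw [hzva]
    have hexp : Complex.exp (Complex.I * ((α - 2 * Real.pi * (j : ℝ) : ℝ) : ℂ)) =
        Complex.exp ((α : ℂ) * Complex.I) := by
      rw [Complex.exp_eq_exp_iff_exists_int]
      exact ⟨-j, by push_cast; ring⟩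
    rw [hexp]
    exact (Complex.norm_mul_exp_arg_mul_I z).symm
  -- the local branch of the logarithm
  set c : ℂ := Complex.exp (-(α : ℂ) * Complex.I) with hc
  have hzc : z * c = ((‖z‖ : ℝ) : ℂ) := by
    conv_lhs => rw [← Complex.norm_mul_exp_arg_mul_I z, ← hα]
    rw [hc, mul_assoc, ← Complex.exp_add,
      show (α : ℂ) * Complex.I + -(α : ℂ) * Complex.I = 0 by ring, Complex.exp_zero, mul_one]
  have hslit : z * c ∈ Complex.slitPlane := by
    rw [hzc]
    exact Complex.mem_slitPlane_iff.mpr (Or.inl (by simpa using hr0))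
  set F : ℂ → ℂ := fun z' => Complex.log (z' * c) + (α : ℂ) * Complex.I with hF
  have hFd : DifferentiableAt ℂ F z := by
    have h1 : DifferentiableAt ℂ (fun z' : ℂ => z' * c) z := differentiableAt_id.mul_const c
    exact ((Complex.differentiableAt_log hslit).comp z h1).add_const _
  have hFz : F z = ((Real.log (‖z‖) : ℝ) : ℂ) + (α : ℂ) * Complex.I := by
    simp only [hF]
    rw [hzc, ← Complex.ofReal_log (norm_nonneg z)]
  have hFzre : (F z).re = Real.log (‖z‖) := by rw [hFz]; simp
  have hFzim : (F z).im = α := by rw [hFz]; simp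
  -- winding numbers at z
  set j₀ : Fin M → ℤ := fun k => J (‖z‖) α k with hj₀
  have hmem : ∀ k, 0 < a * (2 * Real.pi * ((j₀ k : ℤ) : ℝ) + θs k - α)
      + Real.log (‖z‖) := fun k => (hJ _ α k hr0).1
  have hub : ∀ k, a * (2 * Real.pi * (((j₀ k : ℤ) : ℝ) - 1) + θs k - α)
      + Real.log (‖z‖) < 0 := by
    intro k
    have hnot : ¬ (0 < a * (2 * Real.pi * ((j₀ k - 1 : ℤ) : ℝ) + θs k - α)
        + Real.log (‖z‖)) := by
      intro hin
      have h5 : j₀ k ≤ j₀ k - 1 := (hJ _ α k hr0).2 hin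
      omega
    push_neg at hnot
    have hne := hnum k (j₀ k - 1)
    push_cast at hnot hne
    exact lt_of_le_of_ne hnot hne
  -- continuity of the locality conditions
  have hFc : ContinuousAt F z := hFd.continuousAt
  have hPc : ∀ k : Fin M, ContinuousAt (fun z' : ℂ =>
      a * (2 * Real.pi * ((j₀ k : ℤ) : ℝ) + θs k - (F z').im) + (F z').re) z := by
    intro k
    exact (continuousAt_const.mul (continuousAt_const.sub
      (Complex.continuous_im.continuousAt.comp hFc))).add
      (Complex.continuous_re.continuousAt.comp hFc)
  have hQc : ∀ k : Fin M, ContinuousAt (fun z' : ℂ =>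
      a * (2 * Real.pi * (((j₀ k : ℤ) : ℝ) - 1) + θs k - (F z').im) + (F z').re) z := by
    intro k
    exact (continuousAt_const.mul (continuousAt_const.sub
      (Complex.continuous_im.continuousAt.comp hFc))).add
      (Complex.continuous_re.continuousAt.comp hFc)
  -- the eventual conditions
  have ev1 : ∀ᶠ z' in nhds z, z' * c ∈ Complex.slitPlane := by
    have hcont : ContinuousAt (fun z' : ℂ => z' * c) z := (continuous_mul_right c).continuousAt
    exact hcont.eventually_mem (Complex.isOpen_slitPlane.mem_nhds hslit)
  have ev2 : ∀ᶠ z' in nhds z, ∀ k : Fin M,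
      0 < a * (2 * Real.pi * ((j₀ k : ℤ) : ℝ) + θs k - (F z').im) + (F z').re ∧
      a * (2 * Real.pi * (((j₀ k : ℤ) : ℝ) - 1) + θs k - (F z').im) + (F z').re < 0 := by
    rw [Filter.eventually_all]
    intro k
    have e1 : ∀ᶠ z' in nhds z,
        0 < a * (2 * Real.pi * ((j₀ k : ℤ) : ℝ) + θs k - (F z').im) + (F z').re := by
      have hval : 0 < a * (2 * Real.pi * ((j₀ k : ℤ) : ℝ) + θs k - (F z).im) + (F z).re := by
        rw [hFzre, hFzim]; exact hmem k
      exact (hPc k).eventually_mem (isOpen_Ioi.mem_nhds hval)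
    have e2 : ∀ᶠ z' in nhds z,
        a * (2 * Real.pi * (((j₀ k : ℤ) : ℝ) - 1) + θs k - (F z').im) + (F z').re < 0 := by
      have hval : a * (2 * Real.pi * (((j₀ k : ℤ) : ℝ) - 1) + θs k - (F z).im) + (F z).re < 0 := by
        rw [hFzre, hFzim]; exact hub k
      exact (hQc k).eventually_mem (isOpen_Iio.mem_nhds hval)
    exact e1.and e2
  have ev3 : ∀ᶠ z' in nhds z, z' ≠ (0 : ℂ) := eventually_ne_nhds hz0
  -- the holomorphic local model
  have hHd : DifferentiableAt ℂ (fun z' : ℂ => ∑ k : Fin M,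
      (2 * (a : ℂ) * (g k : ℂ) * Complex.exp (Aconst a * (θs k : ℂ)) /
          (((a : ℂ) + Complex.I) * (1 - Complex.exp (2 * (Real.pi : ℂ) * Aconst a)))) *
        Complex.exp ((((a : ℂ) - Complex.I) / ((a : ℂ) + Complex.I)) * F z') *
        Complex.exp (2 * (Real.pi : ℂ) * ((j₀ k : ℤ) : ℂ) * Aconst a)) z := by
    refine DifferentiableAt.fun_sum fun k _ => ?_
    exact (((hFd.const_mul _).cexp).const_mul _).mul_const _
  refine hHd.congr_of_eventuallyEq ?_
  filter_upwards [ev1, ev2, ev3] with w hw1 hw2 hw3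
  have hrw : 0 < ‖w‖ := norm_pos_iff.mpr hw3
  rw [wconj_eq a M g θs J h4 _ _ hrw]
  refine Finset.sum_congr rfl fun k _ => ?_
  -- the branch relation
  have hwc : w * c ≠ 0 := mul_ne_zero hw3 (Complex.exp_ne_zero _)
  have hexpF : Complex.exp (F w) = w := by
    simp only [hF]
    rw [Complex.exp_add, Complex.exp_log hwc, hc, mul_assoc, ← Complex.exp_add,
      show -(α : ℂ) * Complex.I + (α : ℂ) * Complex.I = 0 by ring, Complex.exp_zero, mul_one]
  obtain ⟨n, hFw⟩ : ∃ n : ℤ, F w = Complex.log w + (n : ℂ) * (2 * (Real.pi : ℂ) * Complex.I) :=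
    Complex.exp_eq_exp_iff_exists_int.mp (by rw [hexpF, Complex.exp_log hw3])
  have hre : (F w).re = Real.log (‖w‖) := by
    rw [hFw]; simp [Complex.log_re]
  have him : (F w).im = Complex.arg w + 2 * Real.pi * (n : ℝ) := by
    rw [hFw]; simp [Complex.log_im]; ring
  -- identify the winding number near z
  have hJw : J (‖w‖) ((F w).im) k = j₀ k := by
    refine J_eq_of a ha θs J hJ _ _ hrw k (j₀ k) ?_ ?_
    · rw [← hre]; exact (hw2 k).1
    · rw [← hre]; exact ((hw2 k).2).le
  have hJsh : J (‖w‖) ((F w).im) k = J (‖w‖) (Complex.arg w) k + n := by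
    rw [him]
    exact J_shift a ha θs J hJ _ _ hrw k n
  have hJarg : J (‖w‖) (Complex.arg w) k = j₀ k - n := by omega
  rw [hJarg]
  -- the exponential bookkeeping
  have hFdec : F w = ((Real.log (‖w‖) : ℝ) : ℂ) +
      ((Complex.arg w + 2 * Real.pi * (n : ℝ) : ℝ) : ℂ) * Complex.I := by
    rw [← Complex.re_add_im (F w), hre, him]
  have hkey : Complex.exp ((((a : ℂ) - Complex.I) / ((a : ℂ) + Complex.I)) *
        ((Real.log (‖w‖) : ℂ) + Complex.I * (Complex.arg w : ℂ))) *
      Complex.exp (2 * (Real.pi : ℂ) * ((j₀ k - n : ℤ) : ℂ) * Aconst a) =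
      Complex.exp ((((a : ℂ) - Complex.I) / ((a : ℂ) + Complex.I)) * F w) *
      Complex.exp (2 * (Real.pi : ℂ) * ((j₀ k : ℤ) : ℂ) * Aconst a) := by
    rw [← Complex.exp_add, ← Complex.exp_add, Complex.exp_eq_exp_iff_exists_int]
    refine ⟨n, ?_⟩
    rw [hFdec]
    push_cast
    simp only [Aconst]
    have hA := aux_ne a
    field_simp
    ring
  rw [mul_assoc, mul_assoc, hkey]
  ring
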